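/- arXiv:math-ph/9911046 — 2 statements merged into one kernel-verified Lean document; each statement's English description precedes it below -/
import Mathlib

section
/- Let R > 0, s > 3 and c > 0. Let K : ℝ³ × ℝ³ → ℂ be measurable with ‖K(x,y)‖ ≤ c/‖x−y‖ for all x ≠ y, and let f : ℝ³ → ℂ be measurable with ‖f(y)‖ ≤ c·(1+‖y‖²)^{−s/2} for all y. Then there exists a constant C > 0 such that for every x ∈ ℝ³, ‖∫_{{y : ‖y‖ > R}} K(x,y) f(y) dy‖ ≤ C/(1+‖x‖). (Lemma 4.1 of the paper, stated for a kernel K that may be either the Green function g or its gradient ∇_x g, both of which satisfy the hypothesis.) -/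
open MeasureTheory

noncomputable abbrev E3 : Type := EuclideanSpace ℝ (Fin 3)

open Metric Set Real Filter

lemma E3_finrank : Module.finrank ℝ E3 = 3 := by
  simp [E3]

lemma aux_integrableOn_inv_norm_ball_one :
    IntegrableOn (fun z : E3 => ‖z‖⁻¹) (ball (0 : E3) 1) := by
  have hmeas : Measurable fun z : E3 => ‖z‖⁻¹ := measurable_norm.inv
  refine ⟨hmeas.aestronglyMeasurable, ?_⟩
  rw [HasFiniteIntegral]
  have h1 : ∫⁻ z in ball (0 : E3) 1, ‖(‖z‖⁻¹)‖ₑ ∂volume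
      = ∫⁻ z in ball (0 : E3) 1, ENNReal.ofReal (‖z‖⁻¹) ∂volume := by
    refine lintegral_congr fun z => ?_
    rw [Real.enorm_eq_ofReal (by positivity)]
  rw [h1, lintegral_eq_lintegral_meas_lt _ (Filter.Eventually.of_forall fun z => by positivity)
    hmeas.aemeasurable]
  set V := volume (ball (0 : E3) 1) with hV
  have hVlt : V < ⊤ := measure_ball_lt_top
  have hsplit : ∫⁻ t in Ioi (0:ℝ), (volume.restrict (ball (0:E3) 1)) {a | t < ‖a‖⁻¹}
      ≤ (∫⁻ t in Ioc (0:ℝ) 1, (volume.restrict (ball (0:E3) 1)) {a | t < ‖a‖⁻¹})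
        + ∫⁻ t in Ioi (1:ℝ), (volume.restrict (ball (0:E3) 1)) {a | t < ‖a‖⁻¹} := by
    rw [← Ioc_union_Ioi_eq_Ioi (zero_le_one' ℝ)]
    exact lintegral_union_le _ _ _
  have hp1 : (∫⁻ t in Ioc (0:ℝ) 1, (volume.restrict (ball (0:E3) 1)) {a | t < ‖a‖⁻¹}) ≤ V := by
    calc (∫⁻ t in Ioc (0:ℝ) 1, (volume.restrict (ball (0:E3) 1)) {a | t < ‖a‖⁻¹})
        ≤ ∫⁻ _t in Ioc (0:ℝ) 1, V := by
          refine setLIntegral_mono' measurableSet_Ioc fun t _ => ?_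
          rw [Measure.restrict_apply' measurableSet_ball]
          exact measure_mono inter_subset_right
      _ = V * volume (Ioc (0:ℝ) 1) := setLIntegral_const _ _
      _ = V := by simp [Real.volume_Ioc]
  have hp2 : (∫⁻ t in Ioi (1:ℝ), (volume.restrict (ball (0:E3) 1)) {a | t < ‖a‖⁻¹})
      ≤ (∫⁻ t in Ioi (1:ℝ), ENNReal.ofReal (t ^ (-3 : ℝ))) * V := by
    rw [← lintegral_mul_const _ (by fun_prop)]
    refine setLIntegral_mono' measurableSet_Ioi fun t ht => ?_
    have ht1 : (1:ℝ) < t := ht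
    have hsub : {a : E3 | t < ‖a‖⁻¹} ⊆ ball (0:E3) t⁻¹ := by
      intro a ha
      simp only [mem_setOf_eq] at ha
      have h0 : a ≠ 0 := by
        rintro rfl
        simp only [norm_zero, inv_zero] at ha
        linarith
      have hna : 0 < ‖a‖ := norm_pos_iff.mpr h0
      rw [mem_ball, dist_zero_right]
      nlinarith [mul_lt_mul_of_pos_right ha hna, mul_inv_cancel₀ hna.ne',
        mul_inv_cancel₀ (show t ≠ 0 by linarith), inv_pos.mpr (show (0:ℝ) < t by linarith)]
    calc (volume.restrict (ball (0:E3) 1)) {a | t < ‖a‖⁻¹}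
        ≤ volume {a : E3 | t < ‖a‖⁻¹} := Measure.restrict_le_self _
      _ ≤ volume (ball (0:E3) t⁻¹) := measure_mono hsub
      _ = ENNReal.ofReal (t⁻¹ ^ Module.finrank ℝ E3) * V := Measure.addHaar_ball _ _ (by positivity)
      _ = ENNReal.ofReal (t ^ (-3:ℝ)) * V := by
          rw [E3_finrank]
          congr 1
          rw [show t ^ (-3:ℝ) = (t ^ (3:ℕ))⁻¹ by
            rw [← Real.rpow_natCast t 3, ← Real.rpow_neg (by linarith)]; norm_num, inv_pow]
  have hfin : (∫⁻ t in Ioi (1:ℝ), ENNReal.ofReal (t ^ (-3 : ℝ))) < ⊤ :=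
    (integrableOn_Ioi_rpow_of_lt (by norm_num) one_pos).setLIntegral_lt_top
  refine lt_of_le_of_lt (hsplit.trans (add_le_add hp1 hp2)) ?_
  exact ENNReal.add_lt_top.mpr ⟨hVlt, ENNReal.mul_lt_top hfin hVlt⟩

lemma aux_ball_inv (x : E3) {r : ℝ} (hr : 0 < r) :
    IntegrableOn (fun y : E3 => ‖x - y‖⁻¹) (ball x r) ∧
    ∫ y in ball x r, ‖x - y‖⁻¹ = r ^ 2 * ∫ z in ball (0 : E3) 1, ‖z‖⁻¹ := by
  set F1 : E3 → ℝ := (ball (0:E3) 1).indicator (fun z => ‖z‖⁻¹) with hF1def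
  have hF1int : Integrable F1 :=
    (integrable_indicator_iff measurableSet_ball).mpr aux_integrableOn_inv_norm_ball_one
  have hmem : ∀ z : E3, r⁻¹ • z ∈ ball (0:E3) 1 ↔ z ∈ ball (0:E3) r := by
    intro z
    rw [mem_ball_zero_iff, mem_ball_zero_iff, norm_smul, norm_inv, Real.norm_eq_abs,
      abs_of_pos hr, inv_mul_eq_div, div_lt_one hr]
  have hkey : ∀ z : E3, (ball (0:E3) r).indicator (fun z => ‖z‖⁻¹) z = r⁻¹ * F1 (r⁻¹ • z) := by
    intro z
    by_cases hz : z ∈ ball (0:E3) r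
    · rw [indicator_of_mem hz, hF1def, indicator_of_mem ((hmem z).mpr hz)]
      rw [norm_smul, norm_inv, Real.norm_eq_abs, abs_of_pos hr, mul_inv, inv_inv,
        ← mul_assoc, inv_mul_cancel₀ hr.ne', one_mul]
    · rw [indicator_of_notMem hz, hF1def,
        indicator_of_notMem (fun h => hz ((hmem z).mp h)), mul_zero]
  have h2 : Integrable (fun z : E3 => r⁻¹ * F1 (r⁻¹ • z)) :=
    (hF1int.comp_smul (inv_ne_zero hr.ne')).const_mul _
  have h3 : IntegrableOn (fun z : E3 => ‖z‖⁻¹) (ball (0:E3) r) :=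
    (integrable_indicator_iff measurableSet_ball).mp
      (h2.congr (Filter.Eventually.of_forall fun z => (hkey z).symm))
  have h4 : ∫ z in ball (0:E3) r, ‖z‖⁻¹ = r ^ 2 * ∫ z in ball (0:E3) 1, ‖z‖⁻¹ := by
    rw [← integral_indicator measurableSet_ball]
    rw [integral_congr_ae (Filter.Eventually.of_forall hkey)]
    rw [integral_const_mul, Measure.integral_comp_inv_smul volume F1 r, E3_finrank,
      abs_of_pos (by positivity : (0:ℝ) < r ^ 3), smul_eq_mul, hF1def,
      integral_indicator measurableSet_ball]
    field_simp
  -- translation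
  have hmem2 : ∀ y : E3, x - y ∈ ball (0:E3) r ↔ y ∈ ball x r := by
    intro y
    rw [mem_ball_zero_iff, mem_ball, dist_eq_norm, norm_sub_rev]
  set F2 : E3 → ℝ := (ball (0:E3) r).indicator (fun z => ‖z‖⁻¹) with hF2def
  have hF2int : Integrable F2 := (integrable_indicator_iff measurableSet_ball).mpr h3
  have hkey2 : ∀ y : E3, (ball x r).indicator (fun y => ‖x - y‖⁻¹) y = F2 (x - y) := by
    intro y
    by_cases hy : y ∈ ball x r
    · rw [indicator_of_mem hy, hF2def, indicator_of_mem ((hmem2 y).mpr hy)]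
    · rw [indicator_of_notMem hy, hF2def,
        indicator_of_notMem (fun h => hy ((hmem2 y).mp h))]
  have h5 : Integrable (fun y : E3 => F2 (x - y)) := hF2int.comp_sub_left x
  constructor
  · exact (integrable_indicator_iff measurableSet_ball).mp
      (h5.congr (Filter.Eventually.of_forall fun y => (hkey2 y).symm))
  · rw [← integral_indicator measurableSet_ball,
      integral_congr_ae (Filter.Eventually.of_forall hkey2),
      integral_sub_left_eq_self F2 volume x, hF2def, integral_indicator measurableSet_ball]
    exact h4

/-- Lemma 4.1: for a kernel `K` bounded by `c/‖x-y‖` and a density `f` decaying like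
`(1+‖y‖²)^{-s/2}` with `s > 3`, the potential `∫_{‖y‖>R} K(x,y) f(y) dy` is `O(1/(1+‖x‖))`. -/

theorem volume_potential_decay
    (R s c : ℝ) (hR : 0 < R) (hs : 3 < s) (hc : 0 < c)
    (K : E3 × E3 → ℂ) (hKmeas : Measurable K)
    (hK : ∀ x y : E3, x ≠ y → ‖K (x, y)‖ ≤ c / ‖x - y‖)
    (f : E3 → ℂ) (hfmeas : Measurable f)
    (hf : ∀ y : E3, ‖f y‖ ≤ c * (1 + ‖y‖ ^ 2) ^ (-s / 2)) :
    ∃ C : ℝ, 0 < C ∧ ∀ x : E3,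
      ‖∫ y in {y : E3 | R < ‖y‖}, K (x, y) * f y‖ ≤ C / (1 + ‖x‖) := by
  set w : E3 → ℝ := fun y => (1 + ‖y‖ ^ 2) ^ (-s / 2) with hwdef
  have hw_nonneg : ∀ y, 0 ≤ w y := fun y => Real.rpow_nonneg (by positivity) _
  have hw_le_one : ∀ y : E3, w y ≤ 1 := fun y =>
    Real.rpow_le_one_of_one_le_of_nonpos (by nlinarith [sq_nonneg ‖y‖]) (by linarith)
  have hwint : Integrable w := by
    have h : (Module.finrank ℝ E3 : ℝ) < s := by rw [E3_finrank]; exact_mod_cast hs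
    exact integrable_rpow_neg_one_add_norm_sq h
  have hwmeas : Measurable w :=
    ((continuous_const.add (continuous_norm.pow 2)).rpow_const
      (fun y => Or.inl (show (1:ℝ) + ‖y‖ ^ 2 ≠ 0 by positivity))).measurable
  set M : ℝ := ∫ z in ball (0:E3) 1, ‖z‖⁻¹ with hM
  have hM0 : 0 ≤ M := integral_nonneg fun z => by positivity
  set J : ℝ := ∫ y, w y with hJ
  have hJ0 : 0 ≤ J := integral_nonneg hw_nonneg
  have h16 : (0:ℝ) ≤ 16 ^ (s/2) := Real.rpow_nonneg (by norm_num) _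
  have hC1 : (0:ℝ) ≤ c^2 * 16 ^ (s/2) * M / 4 :=
    div_nonneg (mul_nonneg (mul_nonneg (sq_nonneg c) h16) hM0) (by norm_num)
  have hC2 : (0:ℝ) ≤ 2 * c^2 * J := by positivity
  refine ⟨c^2 * 16 ^ (s/2) * M / 4 + 2 * c^2 * J + 1, by linarith, fun x => ?_⟩
  set b : ℝ := 1 + ‖x‖ with hb
  have hb1 : 1 ≤ b := by simp only [hb, le_add_iff_nonneg_right]; exact norm_nonneg x
  have hb0 : 0 < b := by linarith
  set r : ℝ := b / 2 with hrdef
  have hr : 0 < r := by positivity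
  obtain ⟨hIball, hIval⟩ := aux_ball_inv x hr
  set G : E3 → ℝ := fun y => c^2 * (‖x - y‖⁻¹ * w y) with hG
  have hGmeas : Measurable G :=
    measurable_const.mul (((measurable_const.sub measurable_id).norm.inv).mul hwmeas)
  have hG_nonneg : ∀ y, 0 ≤ G y := fun y =>
    mul_nonneg (sq_nonneg c) (mul_nonneg (by positivity) (hw_nonneg y))
  have hGball : IntegrableOn G (ball x r) := by
    refine (hIball.const_mul (c^2)).mono' hGmeas.aestronglyMeasurable.restrict ?_
    refine Eventually.of_forall fun y => ?_
    rw [Real.norm_of_nonneg (hG_nonneg y)]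
    have h1 := hw_le_one y
    have h2 := hw_nonneg y
    have h0 : (0:ℝ) ≤ ‖x - y‖⁻¹ := by positivity
    calc c^2 * (‖x - y‖⁻¹ * w y) ≤ c^2 * (‖x - y‖⁻¹ * 1) := by
          exact mul_le_mul_of_nonneg_left (mul_le_mul_of_nonneg_left h1 h0) (sq_nonneg c)
      _ = c^2 * ‖x - y‖⁻¹ := by ring
  have hcompl_bound : ∀ y : E3, y ∈ (ball x r)ᶜ → ‖x - y‖⁻¹ ≤ r⁻¹ := by
    intro y hy
    simp only [Set.mem_compl_iff, mem_ball, not_lt] at hy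
    rw [dist_eq_norm, norm_sub_rev] at hy
    exact inv_anti₀ hr hy
  have hGcompl : IntegrableOn G (ball x r)ᶜ := by
    refine ((hwint.const_mul (c^2 * r⁻¹)).integrableOn).mono'
      hGmeas.aestronglyMeasurable.restrict ?_
    refine (ae_restrict_iff' measurableSet_ball.compl).mpr (Eventually.of_forall fun y hy => ?_)
    rw [Real.norm_of_nonneg (hG_nonneg y)]
    have h1 := hcompl_bound y hy
    have h2 := hw_nonneg y
    calc c^2 * (‖x - y‖⁻¹ * w y) ≤ c^2 * (r⁻¹ * w y) := by
          exact mul_le_mul_of_nonneg_left (mul_le_mul_of_nonneg_right h1 h2) (sq_nonneg c)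
      _ = c^2 * r⁻¹ * w y := by ring
  have hGint : Integrable G := by
    have h := hGball.union hGcompl
    rwa [Set.union_compl_self, integrableOn_univ] at h
  have hne : ∀ᵐ y : E3 ∂volume, y ≠ x := by
    rw [ae_iff]
    simp only [ne_eq, not_not, Set.setOf_eq_eq_singleton]
    exact measure_singleton x
  have hae : ∀ᵐ y ∂(volume.restrict {y : E3 | R < ‖y‖}), ‖K (x, y) * f y‖ ≤ G y := by
    refine ae_restrict_of_ae (hne.mono fun y hy => ?_)
    have h1 : ‖K (x, y)‖ ≤ c / ‖x - y‖ := hK x y (Ne.symm hy)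
    calc ‖K (x, y) * f y‖ = ‖K (x, y)‖ * ‖f y‖ := norm_mul _ _
      _ ≤ (c / ‖x - y‖) * (c * w y) :=
          mul_le_mul h1 (hf y) (norm_nonneg _) (by positivity)
      _ = G y := by rw [hG]; rw [div_eq_mul_inv]; ring
  have step1 : ‖∫ y in {y : E3 | R < ‖y‖}, K (x, y) * f y‖ ≤ ∫ y in {y : E3 | R < ‖y‖}, G y :=
    norm_integral_le_of_norm_le hGint.integrableOn hae
  have step2 : ∫ y in {y : E3 | R < ‖y‖}, G y ≤ ∫ y, G y :=
    setIntegral_le_integral hGint (Eventually.of_forall hG_nonneg)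
  have step3 : ∫ y, G y = (∫ y in ball x r, G y) + ∫ y in (ball x r)ᶜ, G y :=
    (integral_add_compl measurableSet_ball hGint).symm
  -- near field
  have hwball : ∀ y ∈ ball x r, w y ≤ 16 ^ (s/2) * b ^ (-s) := by
    intro y hy
    rw [mem_ball, dist_eq_norm] at hy
    have hxy : ‖x - y‖ < r := by rwa [norm_sub_rev] at hy
    have hlow : b^2/16 ≤ 1 + ‖y‖^2 := by
      have h1 : ‖x‖ - ‖y‖ ≤ ‖x - y‖ := norm_sub_norm_le x y
      have h2 : (0:ℝ) ≤ ‖y‖ := norm_nonneg y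
      have h3 : (0:ℝ) ≤ ‖x‖ := norm_nonneg x
      rw [hb]
      rw [hrdef, hb] at hxy
      nlinarith [sq_nonneg (2*‖y‖ - ‖x‖ + 1), sq_nonneg (‖x‖ - 3)]
    have hrp : w y ≤ (b^2/16) ^ (-s/2) :=
      Real.rpow_le_rpow_of_nonpos (by positivity) hlow (by linarith)
    refine hrp.trans (le_of_eq ?_)
    rw [Real.div_rpow (by positivity) (by norm_num), ← Real.rpow_natCast b 2,
      ← Real.rpow_mul hb0.le]
    have e1 : ((2:ℕ):ℝ) * (-s/2) = -s := by push_cast; ring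
    have e2 : (-s/2 : ℝ) = -(s/2) := by ring
    rw [e1, e2, Real.rpow_neg (by norm_num : (0:ℝ) ≤ 16), div_eq_mul_inv, inv_inv, mul_comm]
  have hnear : ∫ y in ball x r, G y ≤ (c^2 * 16^(s/2) * M / 4) * b⁻¹ := by
    have hmono : ∫ y in ball x r, G y
        ≤ ∫ y in ball x r, (c^2 * (16^(s/2) * b^(-s))) * ‖x - y‖⁻¹ := by
      refine setIntegral_mono_on hGball (hIball.const_mul _) measurableSet_ball fun y hy => ?_
      have h1 := hwball y hy
      have h0 : (0:ℝ) ≤ ‖x - y‖⁻¹ := by positivity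
      calc c^2 * (‖x - y‖⁻¹ * w y) ≤ c^2 * (‖x - y‖⁻¹ * (16^(s/2) * b^(-s))) :=
            mul_le_mul_of_nonneg_left (mul_le_mul_of_nonneg_left h1 h0) (sq_nonneg c)
        _ = (c^2 * (16^(s/2) * b^(-s))) * ‖x - y‖⁻¹ := by ring
    have hrhs : ∫ y in ball x r, (c^2 * (16^(s/2) * b^(-s))) * ‖x - y‖⁻¹
        = c^2 * (16^(s/2) * b^(-s)) * (r^2 * M) := by
      rw [integral_const_mul, hIval]
    rw [hrhs] at hmono
    refine hmono.trans ?_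
    have e1 : b ^ (-s) * b^(2:ℕ) = b ^ (2 - s) := by
      rw [← Real.rpow_natCast b 2, ← Real.rpow_add hb0]
      congr 1
      push_cast
      ring
    have e2 : b ^ (2 - s) ≤ b ^ (-1:ℝ) := Real.rpow_le_rpow_of_exponent_le hb1 (by linarith)
    have e3 : b ^ (-1:ℝ) = b⁻¹ := Real.rpow_neg_one b
    calc c^2 * (16^(s/2) * b^(-s)) * (r^2 * M)
        = (c^2 * 16^(s/2) * M / 4) * (b^(-s) * b^(2:ℕ)) := by rw [hrdef]; ring
      _ = (c^2 * 16^(s/2) * M / 4) * b^(2-s) := by rw [e1]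
      _ ≤ (c^2 * 16^(s/2) * M / 4) * b⁻¹ := by
          rw [← e3]; exact mul_le_mul_of_nonneg_left e2 hC1
  -- far field
  have hfar : ∫ y in (ball x r)ᶜ, G y ≤ (2 * c^2 * J) * b⁻¹ := by
    have hmono : ∫ y in (ball x r)ᶜ, G y ≤ ∫ y in (ball x r)ᶜ, (c^2 * r⁻¹) * w y := by
      refine setIntegral_mono_on hGcompl ((hwint.const_mul _).integrableOn)
        measurableSet_ball.compl fun y hy => ?_
      have h1 := hcompl_bound y hy
      have h2 := hw_nonneg y
      calc c^2 * (‖x - y‖⁻¹ * w y) ≤ c^2 * (r⁻¹ * w y) :=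
            mul_le_mul_of_nonneg_left (mul_le_mul_of_nonneg_right h1 h2) (sq_nonneg c)
        _ = (c^2 * r⁻¹) * w y := by ring
    refine hmono.trans ?_
    rw [integral_const_mul]
    have h1 : ∫ y in (ball x r)ᶜ, w y ≤ J :=
      setIntegral_le_integral hwint (Eventually.of_forall hw_nonneg)
    have h2 : r⁻¹ = 2 * b⁻¹ := by rw [hrdef, inv_div]; ring
    calc (c^2 * r⁻¹) * ∫ y in (ball x r)ᶜ, w y ≤ (c^2 * r⁻¹) * J :=
          mul_le_mul_of_nonneg_left h1 (by positivity)
      _ = (2 * c^2 * J) * b⁻¹ := by rw [h2]; ring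
  have hbinv : (0:ℝ) ≤ b⁻¹ := by positivity
  have final : ‖∫ y in {y : E3 | R < ‖y‖}, K (x, y) * f y‖
      ≤ (c^2 * 16^(s/2) * M / 4 + 2 * c^2 * J + 1) * b⁻¹ := by
    linarith [step1, step2, step3, hnear, hfar]
  rwa [div_eq_mul_inv]
end

section
/- Let R > 0 and s > 2. Then ∫_{{y : ‖y‖ > R}} (1/‖x−y‖)·(1+‖y‖²)^{−s/2} dy → 0 as ‖x‖ → ∞; that is, for every ε > 0 there exists ρ > 0 such that for all x ∈ ℝ³ with ‖x‖ ≥ ρ the integral is at most ε. (The remark following Lemma 4.1: for s > 2 the estimate of Lemma 4.1 yields o(1) as ‖x‖ → ∞ in place of the bound c/‖x‖.) -/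
open MeasureTheory

section Auxiliary

open Set Metric
open scoped ENNReal

lemma polar_lintegral (F : ℝ → ℝ≥0∞) (hF : Measurable F) :
    ∫⁻ y : E3, F ‖y‖ = 3 * volume (ball (0:E3) 1) *
      ∫⁻ r in Set.Ioi (0:ℝ), ENNReal.ofReal (r^2) * F r := by
  have hdim : Module.finrank ℝ E3 = 3 := by simp
  have h1 : ∫⁻ y : E3, F ‖y‖ = ∫⁻ y in ({0}ᶜ : Set E3), F ‖y‖ := by
    rw [MeasureTheory.restrict_compl_singleton]
  rw [h1, ← lintegral_subtype_comap (measurableSet_singleton (0:E3)).compl]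
  have h2 := (Measure.measurePreserving_homeomorphUnitSphereProd
      (volume : Measure E3)).lintegral_comp
      (f := fun p : sphere (0:E3) 1 × Set.Ioi (0:ℝ) => F p.2)
      (hF.comp (measurable_subtype_coe.comp measurable_snd))
  simp only [homeomorphUnitSphereProd_apply_snd_coe] at h2
  rw [h2, lintegral_prod _ (by exact ((hF.comp
      (measurable_subtype_coe.comp measurable_snd)).aemeasurable))]
  simp only []
  rw [lintegral_const, Measure.toSphere_apply_univ, hdim]
  have hg : Measurable fun r : Set.Ioi (0:ℝ) => F ↑r := hF.comp measurable_subtype_coe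
  have hf2 : Measurable fun r : Set.Ioi (0:ℝ) => ENNReal.ofReal ((r:ℝ) ^ (Module.finrank ℝ E3 - 1)) :=
    (measurable_subtype_coe.pow_const _).ennreal_ofReal
  have h3 : ∫⁻ (r : Set.Ioi (0:ℝ)), F r ∂(Measure.volumeIoiPow (Module.finrank ℝ E3 - 1))
      = ∫⁻ r in Set.Ioi (0:ℝ), ENNReal.ofReal (r^2) * F r := by
    rw [Measure.volumeIoiPow, lintegral_withDensity_eq_lintegral_mul _ hf2 hg]
    simp only [Pi.mul_apply]
    rw [lintegral_subtype_comap measurableSet_Ioi (fun r : ℝ =>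
      ENNReal.ofReal (r ^ (Module.finrank ℝ E3 - 1)) * F r)]
    simp only [hdim]
  rw [show (3:ℕ) - 1 = Module.finrank ℝ E3 - 1 by rw [hdim], h3, mul_comm]
  norm_num

lemma polar_indicator (A : Set ℝ) (hA : MeasurableSet A) (φ : ℝ → ℝ) (hφ : Measurable φ) :
    ∫⁻ y : E3, (norm ⁻¹' A).indicator (fun y : E3 => ENNReal.ofReal (φ ‖y‖)) y
      = 3 * volume (ball (0:E3) 1) *
        ∫⁻ r in A ∩ Set.Ioi (0:ℝ), ENNReal.ofReal (r^2 * φ r) := by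
  have h1 : ∀ y : E3, (norm ⁻¹' A).indicator (fun y : E3 => ENNReal.ofReal (φ ‖y‖)) y
      = (A.indicator fun r => ENNReal.ofReal (φ r)) ‖y‖ := by
    intro y; by_cases hy : ‖y‖ ∈ A <;> simp [Set.indicator, hy]
  simp_rw [h1]
  rw [polar_lintegral _ ((hφ.ennreal_ofReal).indicator hA)]
  congr 1
  have h2 : ∀ r : ℝ, ENNReal.ofReal (r^2) * A.indicator (fun r => ENNReal.ofReal (φ r)) r
      = A.indicator (fun r => ENNReal.ofReal (r^2 * φ r)) r := by
    intro r; by_cases hr : r ∈ A <;>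
      simp [Set.indicator, hr, ENNReal.ofReal_mul (sq_nonneg r)]
  simp_rw [h2]
  rw [lintegral_indicator hA, Measure.restrict_restrict hA]

lemma lintegral_sub_left' (f : E3 → ℝ≥0∞) (hf : Measurable f) (x : E3) :
    ∫⁻ y, f (x - y) = ∫⁻ y, f y := by
  conv_rhs => rw [← Measure.map_sub_left_eq_self (volume : Measure E3) x]
  rw [lintegral_map hf (by exact measurable_const.sub measurable_id)]

lemma main_bound (R s s' : ℝ) (hR : 0 < R) (hs2 : 2 < s') (hs3 : s' < 3) (hss : s' ≤ s)
    (x : E3) (ht0 : 0 < ‖x‖) (htR : 2*R ≤ ‖x‖) :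
    (∫ y in {y : E3 | R < ‖y‖}, (1 / ‖x - y‖) * (1 + ‖y‖ ^ 2) ^ (-s / 2))
      ≤ (3 * volume (ball (0:E3) 1)).toReal *
        ((2/‖x‖) * ((‖x‖/2)^(3-s') / (3-s')) + 2 * ((‖x‖/2)^(2-s') / (s'-2))
          + (2*‖x‖/3)^(-s') * (‖x‖^2/2)) := by
  have h3s : (0:ℝ) < 3 - s' := by linarith
  have h2s : (0:ℝ) < s' - 2 := by linarith
  set t := ‖x‖ with htdef
  set v : ℝ≥0∞ := volume (ball (0:E3) 1) with hvdef
  have hv_ne : 3 * v ≠ ∞ := ENNReal.mul_ne_top (by norm_num) measure_ball_lt_top.ne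
  set K : ℝ := (3*v).toReal with hKdef
  have hK0 : 0 ≤ K := ENNReal.toReal_nonneg
  set c1 : ℝ := (2/t) * ((t/2)^(3-s') / (3-s')) with hc1def
  set c2 : ℝ := 2 * ((t/2)^(2-s') / (s'-2)) with hc2def
  set c3 : ℝ := (2*t/3)^(-s') * (t^2/2) with hc3def
  have hc1 : 0 ≤ c1 :=
    mul_nonneg (by positivity) (div_nonneg (Real.rpow_nonneg (by positivity) _) h3s.le)
  have hc2 : 0 ≤ c2 :=
    mul_nonneg (by norm_num) (div_nonneg (Real.rpow_nonneg (by positivity) _) h2s.le)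
  have hc3 : 0 ≤ c3 := mul_nonneg (Real.rpow_nonneg (by positivity) _) (by positivity)
  have hS : MeasurableSet {y : E3 | R < ‖y‖} :=
    measurableSet_lt measurable_const measurable_norm
  have hmeas : Measurable fun y : E3 => (1 / ‖x - y‖) * (1 + ‖y‖ ^ 2) ^ (-s / 2) := by
    fun_prop
  have hnn : 0 ≤ᵐ[volume.restrict {y : E3 | R < ‖y‖}]
      fun y : E3 => (1 / ‖x - y‖) * (1 + ‖y‖ ^ 2) ^ (-s / 2) :=
    Filter.Eventually.of_forall fun y => by positivity
  rw [MeasureTheory.integral_eq_lintegral_of_nonneg_ae hnn hmeas.aestronglyMeasurable]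
  apply ENNReal.toReal_le_of_le_ofReal
    (mul_nonneg hK0 (by linarith))
  -- now pure lintegral estimate
  set φ1 : ℝ → ℝ := fun r => (2/t) * r^(-s') with hφ1def
  set φ2 : ℝ → ℝ := fun r => 2 * r^(-(1+s')) with hφ2def
  set φ3 : ℝ → ℝ := fun r => (2*t/3)^(-s') * r⁻¹ with hφ3def
  have hφ1 : Measurable φ1 := by fun_prop
  have hφ2 : Measurable φ2 := by fun_prop
  have hφ3 : Measurable φ3 := by fun_prop
  set G1 : E3 → ℝ≥0∞ :=
    fun y => (norm ⁻¹' Set.Ioc R (t/2)).indicator (fun y : E3 => ENNReal.ofReal (φ1 ‖y‖)) y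
    with hG1def
  set G2 : E3 → ℝ≥0∞ :=
    fun y => (norm ⁻¹' Set.Ioi (t/2)).indicator (fun y : E3 => ENNReal.ofReal (φ2 ‖y‖)) y
    with hG2def
  set H3 : E3 → ℝ≥0∞ :=
    fun z => (norm ⁻¹' Set.Iio t).indicator (fun z : E3 => ENNReal.ofReal (φ3 ‖z‖)) z
    with hH3def
  set G3 : E3 → ℝ≥0∞ := fun y => H3 (x - y) with hG3def
  have hG1m : Measurable G1 :=
    ((hφ1.comp measurable_norm).ennreal_ofReal).indicator
      (measurableSet_Ioc.preimage measurable_norm)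
  have hG2m : Measurable G2 :=
    ((hφ2.comp measurable_norm).ennreal_ofReal).indicator
      (measurableSet_Ioi.preimage measurable_norm)
  have hH3m : Measurable H3 :=
    ((hφ3.comp measurable_norm).ennreal_ofReal).indicator
      (measurableSet_Iio.preimage measurable_norm)
  have hG3m : Measurable G3 := hH3m.comp (measurable_const.sub measurable_id)
  -- pointwise key bound
  have hkey : ∀ y : E3, 0 < ‖y‖ → (1 + ‖y‖ ^ 2) ^ (-s / 2) ≤ ‖y‖ ^ (-s') := by
    intro y hy0
    have e1 : (1 + ‖y‖ ^ 2) ^ (-s/2) ≤ (1 + ‖y‖ ^ 2) ^ (-s'/2) :=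
      Real.rpow_le_rpow_of_exponent_le (by nlinarith [sq_nonneg ‖y‖]) (by linarith)
    have e2 : (1 + ‖y‖ ^ 2) ^ (-s'/2) ≤ (‖y‖ ^ 2 : ℝ) ^ (-s'/2) :=
      Real.rpow_le_rpow_of_nonpos (by positivity) (by linarith) (by linarith)
    have e3 : (‖y‖ ^ 2 : ℝ) ^ (-s'/2) = ‖y‖ ^ (-s') := by
      rw [← Real.rpow_natCast ‖y‖ 2, ← Real.rpow_mul (norm_nonneg y)]
      congr 1
      push_cast
      ring
    calc (1 + ‖y‖ ^ 2) ^ (-s/2) ≤ (1 + ‖y‖ ^ 2) ^ (-s'/2) := e1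
      _ ≤ (‖y‖ ^ 2 : ℝ) ^ (-s'/2) := e2
      _ = ‖y‖ ^ (-s') := e3
  have hpt : ∀ y ∈ {y : E3 | R < ‖y‖},
      ENNReal.ofReal ((1 / ‖x - y‖) * (1 + ‖y‖ ^ 2) ^ (-s / 2)) ≤ G1 y + G2 y + G3 y := by
    intro y hy
    have hyR : R < ‖y‖ := hy
    have hy0 : 0 < ‖y‖ := hR.trans hyR
    have hbase : (1 / ‖x - y‖) * (1 + ‖y‖ ^ 2) ^ (-s / 2) ≤ (1/‖x - y‖) * ‖y‖ ^ (-s') :=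
      mul_le_mul_of_nonneg_left (hkey y hy0) (by positivity)
    rcases le_or_gt ‖y‖ (t/2) with hc | hc
    · -- case 1 : far from x, small y
      have hxy : t/2 ≤ ‖x - y‖ := by
        have h := norm_sub_norm_le x y
        linarith
      have h1 : (1:ℝ)/‖x - y‖ ≤ 2/t := by
        rw [show (2:ℝ)/t = 1/(t/2) by field_simp]
        exact one_div_le_one_div_of_le (by positivity) hxy
      have hb2 : (1 / ‖x - y‖) * (1 + ‖y‖ ^ 2) ^ (-s / 2) ≤ (2/t) * ‖y‖ ^ (-s') :=
        le_trans hbase (mul_le_mul_of_nonneg_right h1 (Real.rpow_nonneg hy0.le _))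
      have hG : G1 y = ENNReal.ofReal ((2/t) * ‖y‖ ^ (-s')) := by
        have hmem : y ∈ norm ⁻¹' Set.Ioc R (t/2) := ⟨hyR, hc⟩
        rw [hG1def]
        simp only [Set.indicator_of_mem hmem, hφ1def]
      calc ENNReal.ofReal ((1 / ‖x - y‖) * (1 + ‖y‖ ^ 2) ^ (-s / 2))
          ≤ G1 y := by rw [hG]; exact ENNReal.ofReal_le_ofReal hb2
        _ ≤ G1 y + G2 y + G3 y := le_add_right (le_add_right le_rfl)
    · rcases le_or_gt (‖y‖/2) ‖x - y‖ with hd | hd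
      · -- case 2
        have h1 : (1:ℝ)/‖x - y‖ ≤ 2/‖y‖ := by
          rw [show (2:ℝ)/‖y‖ = 1/(‖y‖/2) by field_simp]
          exact one_div_le_one_div_of_le (by positivity) hd
        have heq : (2/‖y‖) * ‖y‖ ^ (-s') = 2 * ‖y‖ ^ (-(1+s')) := by
          rw [show -(1+s') = (-1) + (-s') by ring, Real.rpow_add hy0, Real.rpow_neg_one]
          field_simp
        have hb2 : (1 / ‖x - y‖) * (1 + ‖y‖ ^ 2) ^ (-s / 2) ≤ 2 * ‖y‖ ^ (-(1+s')) := by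
          rw [← heq]
          exact le_trans hbase (mul_le_mul_of_nonneg_right h1 (Real.rpow_nonneg hy0.le _))
        have hG : G2 y = ENNReal.ofReal (2 * ‖y‖ ^ (-(1+s'))) := by
          have hmem : y ∈ norm ⁻¹' Set.Ioi (t/2) := hc
          rw [hG2def]
          simp only [Set.indicator_of_mem hmem, hφ2def]
        calc ENNReal.ofReal ((1 / ‖x - y‖) * (1 + ‖y‖ ^ 2) ^ (-s / 2))
            ≤ G2 y := by rw [hG]; exact ENNReal.ofReal_le_ofReal hb2
          _ ≤ G1 y + G2 y := self_le_add_left _ _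
          _ ≤ G1 y + G2 y + G3 y := le_add_right le_rfl
      · -- case 3 : close to x
        have habs := abs_norm_sub_norm_le x y
        rw [abs_le] at habs
        have hy2t : ‖y‖ < 2*t := by linarith [habs.1]
        have h2t3 : 2*t/3 < ‖y‖ := by linarith [habs.2]
        have hxyt : ‖x - y‖ < t := by linarith
        have hrp : ‖y‖ ^ (-s') ≤ (2*t/3) ^ (-s') :=
          Real.rpow_le_rpow_of_nonpos (by positivity) h2t3.le (by linarith)
        have hb2 : (1 / ‖x - y‖) * (1 + ‖y‖ ^ 2) ^ (-s / 2)
            ≤ (2*t/3) ^ (-s') * ‖x - y‖⁻¹ := by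
          have : (1/‖x - y‖) * ‖y‖ ^ (-s') ≤ (1/‖x - y‖) * (2*t/3) ^ (-s') :=
            mul_le_mul_of_nonneg_left hrp (by positivity)
          calc (1 / ‖x - y‖) * (1 + ‖y‖ ^ 2) ^ (-s / 2)
              ≤ (1/‖x - y‖) * ‖y‖ ^ (-s') := hbase
            _ ≤ (1/‖x - y‖) * (2*t/3) ^ (-s') := this
            _ = (2*t/3) ^ (-s') * ‖x - y‖⁻¹ := by rw [one_div]; ring
        have hG : G3 y = ENNReal.ofReal ((2*t/3) ^ (-s') * ‖x - y‖⁻¹) := by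
          have hmem : x - y ∈ norm ⁻¹' Set.Iio t := hxyt
          rw [hG3def, hH3def]
          simp only [Set.indicator_of_mem hmem, hφ3def]
        calc ENNReal.ofReal ((1 / ‖x - y‖) * (1 + ‖y‖ ^ 2) ^ (-s / 2))
            ≤ G3 y := by rw [hG]; exact ENNReal.ofReal_le_ofReal hb2
          _ ≤ G1 y + G2 y + G3 y := self_le_add_left _ _
  -- subset facts
  have hsub1 : Set.Ioc R (t/2) ⊆ Set.Ioi (0:ℝ) := fun r hr => hR.trans hr.1
  -- integral I1
  have hint1 : IntegrableOn (fun r : ℝ => (2/t) * r^(2-s')) (Set.Ioc R (t/2)) := by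
    have hco : ContinuousOn (fun r : ℝ => (2/t) * r^(2-s')) (Set.Icc R (t/2)) := by
      refine continuousOn_const.mul (ContinuousOn.rpow_const continuousOn_id fun r hr => Or.inl ?_)
      exact ne_of_gt (lt_of_lt_of_le hR hr.1)
    exact (hco.integrableOn_Icc).mono_set Set.Ioc_subset_Icc_self
  have hnn1 : 0 ≤ᵐ[volume.restrict (Set.Ioc R (t/2))] fun r : ℝ => (2/t) * r^(2-s') := by
    filter_upwards [ae_restrict_mem measurableSet_Ioc] with r hr
    exact mul_nonneg (by positivity) (Real.rpow_nonneg (le_of_lt (hR.trans hr.1)) _)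
  have hI1 : ∫⁻ y, G1 y ≤ (3*v) * ENNReal.ofReal c1 := by
    rw [hG1def, polar_indicator _ measurableSet_Ioc _ hφ1, ← hvdef,
      Set.inter_eq_self_of_subset_left hsub1]
    refine mul_le_mul_right ?_ _
    have hAcong : ∫⁻ r in Set.Ioc R (t/2), ENNReal.ofReal (r^2 * φ1 r)
        = ∫⁻ r in Set.Ioc R (t/2), ENNReal.ofReal ((2/t) * r^(2-s')) := by
      refine setLIntegral_congr_fun measurableSet_Ioc (fun r hr => ?_)
      have hr0 : 0 < r := hR.trans hr.1
      congr 1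
      rw [hφ1def]
      have hpow : r ^ ((2:ℝ)-s') = r^2 * r^(-s') := by
        rw [show (2:ℝ)-s' = ((2:ℕ):ℝ) + (-s') by push_cast; ring, Real.rpow_add hr0,
          Real.rpow_natCast]
      rw [hpow]; ring
    rw [hAcong, ← ofReal_integral_eq_lintegral_ofReal hint1 hnn1]
    refine ENNReal.ofReal_le_ofReal ?_
    rw [integral_const_mul, hc1def]
    refine mul_le_mul_of_nonneg_left ?_ (by positivity)
    have hRt : R ≤ t/2 := by linarith
    rw [← intervalIntegral.integral_of_le hRt,
      integral_rpow (Or.inl (by linarith : (-1:ℝ) < 2-s')),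
      show (2-s'+1:ℝ) = 3-s' by ring]
    have h0R : (0:ℝ) ≤ R ^ (3-s') := Real.rpow_nonneg hR.le _
    rw [div_le_div_iff_of_pos_right h3s]
    linarith
  -- integral I2
  have hint2 : IntegrableOn (fun r : ℝ => 2 * r^(1-s')) (Set.Ioi (t/2)) :=
    (integrableOn_Ioi_rpow_of_lt (by linarith) (by positivity)).const_mul 2
  have hnn2 : 0 ≤ᵐ[volume.restrict (Set.Ioi (t/2))] fun r : ℝ => 2 * r^(1-s') := by
    filter_upwards [ae_restrict_mem measurableSet_Ioi] with r hr
    have hr0 : (0:ℝ) < r := lt_trans (by positivity) hr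
    exact mul_nonneg (by norm_num) (Real.rpow_nonneg hr0.le _)
  have hI2 : ∫⁻ y, G2 y ≤ (3*v) * ENNReal.ofReal c2 := by
    rw [hG2def, polar_indicator _ measurableSet_Ioi _ hφ2, ← hvdef,
      Set.inter_eq_self_of_subset_left (Set.Ioi_subset_Ioi (by positivity))]
    refine mul_le_mul_right ?_ _
    have hAcong : ∫⁻ r in Set.Ioi (t/2), ENNReal.ofReal (r^2 * φ2 r)
        = ∫⁻ r in Set.Ioi (t/2), ENNReal.ofReal (2 * r^(1-s')) := by
      refine setLIntegral_congr_fun measurableSet_Ioi (fun r hr => ?_)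
      have hr0 : (0:ℝ) < r := lt_trans (by positivity) hr
      congr 1
      rw [hφ2def]
      have hpow : r ^ ((1:ℝ)-s') = r^2 * r^(-(1+s')) := by
        rw [show (1:ℝ)-s' = ((2:ℕ):ℝ) + (-(1+s')) by push_cast; ring, Real.rpow_add hr0,
          Real.rpow_natCast]
      rw [hpow]; ring
    rw [hAcong, ← ofReal_integral_eq_lintegral_ofReal hint2 hnn2]
    refine ENNReal.ofReal_le_ofReal ?_
    rw [integral_const_mul,
      integral_Ioi_rpow_of_lt (by linarith : (1:ℝ)-s' < -1) (by positivity : (0:ℝ) < t/2),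
      hc2def, show (1-s'+1:ℝ) = 2-s' by ring]
    have heq2 : -(t/2)^((2:ℝ)-s')/(2-s') = (t/2)^((2:ℝ)-s')/(s'-2) := by
      rw [show (2:ℝ)-s' = -(s'-2) from by ring]
      rw [div_neg, neg_div, neg_neg]
    rw [heq2]
  -- integral I3
  have hint3 : IntegrableOn (fun r : ℝ => (2*t/3)^(-s') * r) (Set.Ioo 0 t) :=
    ((continuous_const.mul continuous_id).integrableOn_Icc).mono_set Set.Ioo_subset_Icc_self
  have hnn3 : 0 ≤ᵐ[volume.restrict (Set.Ioo 0 t)] fun r : ℝ => (2*t/3)^(-s') * r := by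
    filter_upwards [ae_restrict_mem measurableSet_Ioo] with r hr
    exact mul_nonneg (Real.rpow_nonneg (by positivity) _) hr.1.le
  have hI3 : ∫⁻ y, G3 y ≤ (3*v) * ENNReal.ofReal c3 := by
    have hstep : ∫⁻ y, G3 y = ∫⁻ z, H3 z := by
      rw [hG3def]; exact lintegral_sub_left' H3 hH3m x
    rw [hstep, hH3def, polar_indicator _ measurableSet_Iio _ hφ3, ← hvdef,
      Set.Iio_inter_Ioi]
    refine mul_le_mul_right ?_ _
    have hAcong : ∫⁻ r in Set.Ioo 0 t, ENNReal.ofReal (r^2 * φ3 r)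
        = ∫⁻ r in Set.Ioo 0 t, ENNReal.ofReal ((2*t/3)^(-s') * r) := by
      refine setLIntegral_congr_fun measurableSet_Ioo (fun r hr => ?_)
      have hr0 : r ≠ 0 := ne_of_gt hr.1
      congr 1
      rw [hφ3def]
      field_simp
    rw [hAcong, ← ofReal_integral_eq_lintegral_ofReal hint3 hnn3]
    refine ENNReal.ofReal_le_ofReal ?_
    rw [integral_const_mul, hc3def]
    refine mul_le_mul_of_nonneg_left ?_ (Real.rpow_nonneg (by positivity) _)
    rw [Measure.restrict_congr_set Ioo_ae_eq_Ioc,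
      ← intervalIntegral.integral_of_le ht0.le, integral_id]
    norm_num
  -- assemble
  calc ∫⁻ y in {y : E3 | R < ‖y‖},
        ENNReal.ofReal (1 / ‖x - y‖ * (1 + ‖y‖ ^ 2) ^ (-s / 2))
      ≤ ∫⁻ y in {y : E3 | R < ‖y‖}, (G1 y + G2 y + G3 y) := by
        refine lintegral_mono_ae ?_
        filter_upwards [ae_restrict_mem hS] with y hy using hpt y hy
    _ ≤ ∫⁻ y, (G1 y + G2 y + G3 y) := lintegral_mono' Measure.restrict_le_self le_rfl
    _ = (∫⁻ y, G1 y) + (∫⁻ y, G2 y) + (∫⁻ y, G3 y) := by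
        rw [lintegral_add_left (f := fun y => G1 y + G2 y) (hG1m.add hG2m), lintegral_add_left hG1m]
    _ ≤ (3*v) * ENNReal.ofReal c1 + (3*v) * ENNReal.ofReal c2 + (3*v) * ENNReal.ofReal c3 :=
        add_le_add (add_le_add hI1 hI2) hI3
    _ = (3*v) * ENNReal.ofReal (c1 + c2 + c3) := by
        rw [ENNReal.ofReal_add (add_nonneg hc1 hc2) hc3, ENNReal.ofReal_add hc1 hc2]
        ring
    _ = ENNReal.ofReal (K * (c1 + c2 + c3)) := by
        rw [ENNReal.ofReal_mul hK0, hKdef, ENNReal.ofReal_toReal hv_ne]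

end Auxiliary

open Set Metric in
open scoped ENNReal in
/-- Remark after Lemma 4.1: for `s > 2`, `∫_{‖y‖>R} ‖x-y‖⁻¹ (1+‖y‖²)^{-s/2} dy = o(1)`
as `‖x‖ → ∞`. -/
theorem volume_potential_little_o
    (R s : ℝ) (hR : 0 < R) (hs : 2 < s) :
    ∀ ε : ℝ, 0 < ε → ∃ ρ : ℝ, 0 < ρ ∧ ∀ x : E3, ρ ≤ ‖x‖ →
      (∫ y in {y : E3 | R < ‖y‖}, (1 / ‖x - y‖) * (1 + ‖y‖ ^ 2) ^ (-s / 2)) ≤ ε := by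
  intro ε hε
  set s' : ℝ := min s (5/2) with hs'def
  have hs2 : 2 < s' := lt_min hs (by norm_num)
  have hs3 : s' < 3 := lt_of_le_of_lt (min_le_right _ _) (by norm_num)
  have hss : s' ≤ s := min_le_left _ _
  have h3s : (0:ℝ) < 3 - s' := by linarith
  have h2s : (0:ℝ) < s' - 2 := by linarith
  set K : ℝ := (3 * volume (ball (0:E3) 1)).toReal with hK
  set A : ℝ := K * ((2 / (2:ℝ)^((3:ℝ)-s'))/(3-s') + (2 / (2:ℝ)^((2:ℝ)-s'))/(s'-2)
    + ((2:ℝ)/3)^(-s')/2) with hA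
  have heq : ∀ t : ℝ, 0 < t →
      K * ((2/t) * ((t/2)^(3-s') / (3-s')) + 2 * ((t/2)^(2-s') / (s'-2))
        + (2*t/3)^(-s') * (t^2/2)) = A * t^(2-s') := by
    intro t ht
    have h2pos : (0:ℝ) < (2:ℝ)^((3:ℝ)-s') := Real.rpow_pos_of_pos two_pos _
    have h2pos' : (0:ℝ) < (2:ℝ)^((2:ℝ)-s') := Real.rpow_pos_of_pos two_pos _
    have e1 : (t/2:ℝ)^((3:ℝ)-s') = t^((3:ℝ)-s')/2^((3:ℝ)-s') :=
      Real.div_rpow ht.le (by norm_num) _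
    have e2 : (t/2:ℝ)^((2:ℝ)-s') = t^((2:ℝ)-s')/2^((2:ℝ)-s') :=
      Real.div_rpow ht.le (by norm_num) _
    have e3 : (2*t/3:ℝ)^(-s') = ((2:ℝ)/3)^(-s') * t^(-s') := by
      rw [show (2*t/3:ℝ) = (2/3)*t by ring, Real.mul_rpow (by norm_num) ht.le]
    have e4 : t^((3:ℝ)-s') = t^((2:ℝ)-s') * t := by
      rw [show (3:ℝ)-s' = ((2:ℝ)-s')+1 by ring, Real.rpow_add_one ht.ne']
    have e5 : t^(-s') = t^((2:ℝ)-s') / t^2 := by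
      rw [eq_div_iff (by positivity : (t:ℝ)^2 ≠ 0), ← Real.rpow_natCast t 2,
        ← Real.rpow_add ht]
      congr 1
      push_cast
      ring
    rw [e1, e2, e3, e4, e5, hA]
    field_simp
  have htend : Filter.Tendsto (fun t : ℝ => A * t^((2:ℝ)-s')) Filter.atTop (nhds 0) := by
    have h := (tendsto_rpow_neg_atTop (by linarith : (0:ℝ) < s'-2)).const_mul A
    rw [mul_zero] at h
    have hfe : (fun t : ℝ => A * t^((2:ℝ)-s')) = fun t : ℝ => A * t^(-(s'-2)) := by
      funext u
      rw [neg_sub]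
    rw [hfe]
    exact h
  have hev : ∀ᶠ t in Filter.atTop, A * t^((2:ℝ)-s') < ε := htend.eventually_lt_const hε
  obtain ⟨ρ₀, hρ₀⟩ := Filter.eventually_atTop.mp (hev.and (Filter.eventually_ge_atTop (2*R)))
  refine ⟨max ρ₀ 1, lt_of_lt_of_le one_pos (le_max_right _ _), ?_⟩
  intro x hx
  have hx1 : (1:ℝ) ≤ ‖x‖ := le_trans (le_max_right _ _) hx
  have ht0 : (0:ℝ) < ‖x‖ := lt_of_lt_of_le one_pos hx1
  obtain ⟨hφx, hRx⟩ := hρ₀ ‖x‖ (le_trans (le_max_left _ _) hx)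
  have hmb := main_bound R s s' hR hs2 hs3 hss x ht0 hRx
  have heqx := heq ‖x‖ ht0
  rw [← hK] at hmb
  linarith
end
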